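/- arXiv:2409.11339 — 2 statements merged into one kernel-verified Lean document; each statement's English description precedes it below -/
import Mathlib

section
/- Fix r ≥ 0, σ > 0, Δt > 0 and define γ̂* := 2·[ -1 + (Φ((r + σ²/2)√Δt/σ) - e^{-rΔt}·Φ((r - σ²/2)√Δt/σ)) / (1 - e^{-(r + σ²/4)Δt/2}) ]^{-1}. Then γ̂* > 0; equivalently, Φ((r + σ²/2)√Δt/σ) - e^{-rΔt}·Φ((r - σ²/2)√Δt/σ) > 1 - e^{-(r + σ²/4)Δt/2}. -/
open Real

/-- standard normal CDF -/
noncomputable def Phi (x : ℝ) : ℝ := ∫ t in Set.Iic x, Real.exp (-t^2/2) / Real.sqrt (2*π)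


open MeasureTheory Set

noncomputable def phi (z : ℝ) : ℝ := Real.exp (-z^2/2) / Real.sqrt (2*π)

lemma Phi_eq (x : ℝ) : Phi x = ∫ t in Set.Iic x, phi t := rfl

lemma phi_pos (z : ℝ) : 0 < phi z :=
  div_pos (Real.exp_pos _) (Real.sqrt_pos.2 (by positivity))

lemma phi_eq (z : ℝ) : phi z = Real.exp (-(1/2) * z^2) * (Real.sqrt (2*π))⁻¹ := by
  rw [phi, div_eq_mul_inv]; ring_nf

lemma integrable_phi : Integrable phi := by
  have : phi = fun z => Real.exp (-(1/2) * z^2) * (Real.sqrt (2*π))⁻¹ := funext phi_eq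
  rw [this]
  exact (integrable_exp_neg_mul_sq (by norm_num)).mul_const _

lemma integral_phi : ∫ z, phi z = 1 := by
  have : phi = fun z => Real.exp (-(1/2) * z^2) * (Real.sqrt (2*π))⁻¹ := funext phi_eq
  rw [this, integral_mul_const, integral_gaussian]
  rw [show π / (1/2) = 2 * π by ring]
  rw [mul_inv_cancel₀ (by positivity)]

lemma exp_mul_phi (m z : ℝ) :
    Real.exp (m*z) * phi z = Real.exp (m^2/2) * phi (z - m) := by
  simp only [phi, div_eq_mul_inv, ← mul_assoc, ← Real.exp_add]
  ring_nf

lemma shift_Iic (f : ℝ → ℝ) (c m : ℝ) :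
    ∫ x in Set.Iic c, f (x - m) = ∫ x in Set.Iic (c - m), f x := by
  have A : MeasurableEmbedding fun x : ℝ => x - m := by
    simpa [sub_eq_add_neg] using
      (Homeomorph.addRight (-m)).isClosedEmbedding.measurableEmbedding
  have h := MeasurableEmbedding.setIntegral_map (μ := volume) A f (Set.Iic (c - m))
  have hmap : Measure.map (fun x : ℝ => x - m) volume = volume := by
    simpa [sub_eq_add_neg] using MeasureTheory.map_add_right_eq_self (volume : Measure ℝ) (-m)
  rw [hmap] at h
  have hpre : (fun x : ℝ => x - m) ⁻¹' Set.Iic (c - m) = Set.Iic c := by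
    ext x; simp [sub_le_sub_iff_right]
  rw [hpre] at h
  exact h.symm

lemma integrable_exp_mul_phi (m : ℝ) : Integrable (fun z => Real.exp (m*z) * phi z) := by
  have : (fun z => Real.exp (m*z) * phi z)
      = fun z => Real.exp (m^2/2) * phi (z - m) := funext fun z => exp_mul_phi m z
  rw [this]
  exact (integrable_phi.comp_sub_right m).const_mul _

lemma integral_exp_mul_phi (m : ℝ) : ∫ z, Real.exp (m*z) * phi z = Real.exp (m^2/2) := by
  have : (fun z => Real.exp (m*z) * phi z)
      = fun z => Real.exp (m^2/2) * phi (z - m) := funext fun z => exp_mul_phi m z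
  rw [this, integral_const_mul, integral_sub_right_eq_self phi m, integral_phi, mul_one]

lemma setIntegral_exp_mul_phi_Iic (m c : ℝ) :
    ∫ z in Set.Iic c, Real.exp (m*z) * phi z = Real.exp (m^2/2) * Phi (c - m) := by
  simp only [exp_mul_phi]
  rw [MeasureTheory.integral_const_mul, shift_Iic phi c m, ← Phi_eq]

lemma setIntegral_phi_Iic (c : ℝ) : ∫ z in Set.Iic c, phi z = Phi c := (Phi_eq c).symm

lemma setIntegral_exp_mul_phi_Ioi (m c : ℝ) :
    ∫ z in Set.Ioi c, Real.exp (m*z) * phi z = Real.exp (m^2/2) * (1 - Phi (c - m)) := by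
  have h := MeasureTheory.integral_add_compl (measurableSet_Iic (a := c))
    (integrable_exp_mul_phi m)
  rw [compl_Iic, setIntegral_exp_mul_phi_Iic, integral_exp_mul_phi] at h
  rw [mul_one_sub]
  linarith

lemma setIntegral_phi_Ioi (c : ℝ) : ∫ z in Set.Ioi c, phi z = 1 - Phi c := by
  have h := MeasureTheory.integral_add_compl (measurableSet_Iic (a := c)) integrable_phi
  rw [compl_Iic, setIntegral_phi_Iic, integral_phi] at h
  linarith

lemma phi_even (z : ℝ) : phi (-z) = phi z := by rw [phi, phi, neg_pow, neg_pow]; norm_num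

lemma Phi_neg (x : ℝ) : Phi (-x) = 1 - Phi x := by
  rw [Phi_eq]
  have h : ∫ t in Set.Iic (-x), phi t = ∫ t in Set.Iic (-x), phi (-t) := by
    simp only [phi_even]
  rw [h, integral_comp_neg_Iic, neg_neg, setIntegral_phi_Ioi]

lemma core (ρ u : ℝ) (hρ : 0 ≤ ρ) (hu : 0 < u) :
    Phi (ρ+u) - Real.exp (-(2*ρ*u)) * Phi (ρ-u) > 1 - Real.exp (-(ρ*u + u^2/2)) := by
  set c : ℝ := u - ρ with hc
  -- integrands
  set g : ℝ → ℝ := fun z =>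
    Real.exp (-(u^2) - ρ*u) * (Real.exp (u*z) * phi z) - Real.exp (-(2*ρ*u)) * phi z with hg
  set h : ℝ → ℝ := fun z =>
    Real.exp (-(u^2) - ρ*u) * (Real.exp (u*z) * phi z)
      - Real.exp (-(2*u^2)) * (Real.exp ((2*u)*z) * phi z) with hh
  have hg_int : MeasureTheory.Integrable g :=
    (((integrable_exp_mul_phi u).const_mul _)).sub (integrable_phi.const_mul _)
  have hΦ1 : Phi (c - u) = 1 - Phi ρ := by
    rw [show c - u = -ρ by rw [hc]; ring, Phi_neg]
  have hΦ2 : Phi (ρ - u) = 1 - Phi c := by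
    rw [show ρ - u = -c by rw [hc]; ring, Phi_neg]
  have he1 : Real.exp (-(u^2) - ρ*u) * Real.exp (u^2/2) = Real.exp (-(ρ*u + u^2/2)) := by
    rw [← Real.exp_add]; ring_nf
  have he2 : Real.exp (-(2*u^2)) * Real.exp ((2*u)^2/2) = 1 := by
    rw [← Real.exp_add, show -(2*u^2) + (2*u)^2/2 = 0 by ring, Real.exp_zero]
  have hΦ3 : Phi (c - 2*u) = 1 - Phi (ρ + u) := by
    rw [show c - 2*u = -(ρ+u) by rw [hc]; ring, Phi_neg]
  -- value of the Ioi-integral of g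
  have hAval : ∫ z in Set.Ioi c, g z
      = Real.exp (-(ρ*u + u^2/2)) * Phi ρ - Real.exp (-(2*ρ*u)) * Phi (ρ - u) := by
    rw [hg]
    rw [MeasureTheory.integral_sub
      (((integrable_exp_mul_phi u).const_mul _)).integrableOn
      ((integrable_phi.const_mul _)).integrableOn]
    rw [MeasureTheory.integral_const_mul, MeasureTheory.integral_const_mul,
      setIntegral_exp_mul_phi_Ioi, setIntegral_phi_Ioi, hΦ1, hΦ2, ← mul_assoc, he1]
    ring
  -- value of the Iic-integral of h
  have hBval : ∫ z in Set.Iic c, h z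
      = Real.exp (-(ρ*u + u^2/2)) - Real.exp (-(ρ*u + u^2/2)) * Phi ρ - (1 - Phi (ρ + u)) := by
    rw [hh]
    rw [MeasureTheory.integral_sub
      (((integrable_exp_mul_phi u).const_mul _)).integrableOn
      (((integrable_exp_mul_phi (2*u)).const_mul _)).integrableOn]
    rw [MeasureTheory.integral_const_mul, MeasureTheory.integral_const_mul,
      setIntegral_exp_mul_phi_Iic, setIntegral_exp_mul_phi_Iic, hΦ1, hΦ3,
      ← mul_assoc, he1, ← mul_assoc, he2]
    ring
  -- B ≥ 0
  have hB : 0 ≤ ∫ z in Set.Iic c, h z := by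
    apply MeasureTheory.setIntegral_nonneg measurableSet_Iic
    intro z hz
    rw [hh]
    simp only
    rw [← mul_assoc, ← mul_assoc, ← Real.exp_add, ← Real.exp_add, sub_nonneg]
    apply mul_le_mul_of_nonneg_right _ (phi_pos z).le
    apply Real.exp_le_exp.2
    have : u * z ≤ u * c := mul_le_mul_of_nonneg_left hz hu.le
    nlinarith [this]
  -- A > 0
  have hgpos : ∀ z ∈ Set.Ioo c (c+1), 0 < g z := by
    intro z hz
    rw [hg]
    simp only
    rw [← mul_assoc, ← Real.exp_add, sub_pos]
    apply mul_lt_mul_of_pos_right _ (phi_pos z)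
    apply Real.exp_lt_exp.2
    have : u * c < u * z := mul_lt_mul_of_pos_left hz.1 hu
    nlinarith [this]
  have hgnonneg : ∀ z ∈ Set.Ioi c, 0 ≤ g z := by
    intro z hz
    rw [hg]
    simp only
    rw [← mul_assoc, ← Real.exp_add, sub_nonneg]
    apply mul_le_mul_of_nonneg_right _ (phi_pos z).le
    apply Real.exp_le_exp.2
    have : u * c ≤ u * z := mul_le_mul_of_nonneg_left (le_of_lt hz) hu.le
    nlinarith [this]
  have hA : 0 < ∫ z in Set.Ioi c, g z := by
    have h1 : 0 < ∫ z in c..(c+1), g z := by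
      apply intervalIntegral.intervalIntegral_pos_of_pos_on
        hg_int.intervalIntegrable hgpos (by linarith)
    have h2 : (∫ z in c..(c+1), g z) ≤ ∫ z in Set.Ioi c, g z := by
      rw [intervalIntegral.integral_of_le (by linarith : c ≤ c+1)]
      apply MeasureTheory.setIntegral_mono_set hg_int.integrableOn
      · filter_upwards [MeasureTheory.ae_restrict_mem measurableSet_Ioi] with z hz
        exact hgnonneg z hz
      · exact HasSubset.Subset.eventuallyLE Set.Ioc_subset_Ioi_self
    linarith
  linarith [hAval, hBval, hA, hB]

theorem stmt4 (r σ Δt : ℝ) (hr : 0 ≤ r) (hσ : 0 < σ) (hΔt : 0 < Δt) :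
    Phi ((r + σ^2/2) * Real.sqrt Δt / σ)
        - Real.exp (-(r*Δt)) * Phi ((r - σ^2/2) * Real.sqrt Δt / σ)
      > 1 - Real.exp (-(r + σ^2/4)*Δt/2) ∧
    0 < 2 * (-1 +
        (Phi ((r + σ^2/2) * Real.sqrt Δt / σ)
          - Real.exp (-(r*Δt)) * Phi ((r - σ^2/2) * Real.sqrt Δt / σ)) /
        (1 - Real.exp (-(r + σ^2/4)*Δt/2)))⁻¹ := by
  have hs : 0 < Real.sqrt Δt := Real.sqrt_pos.2 hΔt
  have hs2 : Real.sqrt Δt ^ 2 = Δt := Real.sq_sqrt hΔt.le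
  set ρ : ℝ := r * Real.sqrt Δt / σ with hρdef
  set u : ℝ := σ * Real.sqrt Δt / 2 with hudef
  have hρ : 0 ≤ ρ := by positivity
  have hu : 0 < u := by positivity
  have h1 : (r + σ^2/2) * Real.sqrt Δt / σ = ρ + u := by
    rw [hρdef, hudef]; field_simp
  have h2 : (r - σ^2/2) * Real.sqrt Δt / σ = ρ - u := by
    rw [hρdef, hudef]; field_simp
  have h3 : -(r*Δt) = -(2*ρ*u) := by
    rw [hρdef, hudef]; field_simp; linear_combination (r) * hs2
  have h4 : -(r + σ^2/4)*Δt/2 = -(ρ*u + u^2/2) := by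
    rw [hρdef, hudef]; field_simp; linear_combination (16*r + 4*σ^2) * hs2
  have key : Phi ((r + σ^2/2) * Real.sqrt Δt / σ)
        - Real.exp (-(r*Δt)) * Phi ((r - σ^2/2) * Real.sqrt Δt / σ)
      > 1 - Real.exp (-(r + σ^2/4)*Δt/2) := by
    rw [h1, h2, h3, h4]
    exact core ρ u hρ hu
  refine ⟨key, ?_⟩
  have hD : 0 < 1 - Real.exp (-(r + σ^2/4)*Δt/2) := by
    have : -(r + σ^2/4)*Δt/2 < 0 := by nlinarith
    linarith [Real.exp_lt_one_iff.2 this]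
  set N : ℝ := Phi ((r + σ^2/2) * Real.sqrt Δt / σ)
      - Real.exp (-(r*Δt)) * Phi ((r - σ^2/2) * Real.sqrt Δt / σ)
  have hND : 1 < N / (1 - Real.exp (-(r + σ^2/4)*Δt/2)) := (one_lt_div hD).2 key
  have : 0 < -1 + N / (1 - Real.exp (-(r + σ^2/4)*Δt/2)) := by linarith
  positivity
end

section
/- For r = 0, Δt > 0, γ̂ > 0, define G(σ) := (2+γ̂)[1 - e^{-σ²Δt/8}] - γ̂[2Φ(σ√Δt/2) - 1] on (0,∞). Then there exists a unique σ* > 0 with G(σ*) = 0. Moreover σ* > σ̄ := (γ̂/(2+γ̂))·√(8/(πΔt)), G(σ) < 0 for σ ∈ (0, σ*), and G(σ) > 0 for σ > σ*. -/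
open Real

open MeasureTheory Set

lemma gauss_eq : (fun t : ℝ => Real.exp (-t^2/2) / Real.sqrt (2*π))
    = fun t : ℝ => Real.exp (-(1/2:ℝ)*t^2) / Real.sqrt (2*π) := by
  funext t; ring_nf

lemma gauss_integrable : Integrable (fun t : ℝ => Real.exp (-t^2/2) / Real.sqrt (2*π)) := by
  rw [gauss_eq]
  exact (integrable_exp_neg_mul_sq (by norm_num)).div_const _

lemma gauss_total : ∫ t : ℝ, Real.exp (-t^2/2) / Real.sqrt (2*π) = 1 := by
  rw [gauss_eq]
  rw [MeasureTheory.integral_div, integral_gaussian]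
  rw [show π / (1/2:ℝ) = 2*π by ring]
  rw [div_self (by positivity : Real.sqrt (2*π) ≠ 0)]

lemma gauss_cont : Continuous (fun t : ℝ => Real.exp (-t^2/2) / Real.sqrt (2*π)) := by
  apply Continuous.div_const
  exact Real.continuous_exp.comp (by continuity)

lemma Phi_zero : Phi 0 = 1/2 := by
  have h1 : (∫ t in Set.Iic (0:ℝ), Real.exp (-t^2/2) / Real.sqrt (2*π))
      = ∫ t in Set.Ioi (0:ℝ), Real.exp (-t^2/2) / Real.sqrt (2*π) := by
    rw [← neg_zero, ← integral_comp_neg_Iic, neg_zero]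
    apply setIntegral_congr_fun measurableSet_Iic
    intro x _; simp [neg_sq]
  have h2 := intervalIntegral.integral_Iic_add_Ioi (b := (0:ℝ))
    (gauss_integrable.integrableOn) (gauss_integrable.integrableOn)
  rw [gauss_total] at h2
  unfold Phi
  rw [← h1] at h2
  linarith

lemma Phi_le_one (x : ℝ) : Phi x ≤ 1 := by
  unfold Phi
  rw [← gauss_total]
  exact setIntegral_le_integral gauss_integrable
    (Filter.Eventually.of_forall fun t => by positivity)

lemma hasDerivAt_Phi (x : ℝ) :
    HasDerivAt Phi (Real.exp (-x^2/2) / Real.sqrt (2*π)) x := by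
  have hfun : Phi = fun y => Phi 0 + ∫ t in (0:ℝ)..y, Real.exp (-t^2/2) / Real.sqrt (2*π) := by
    funext y
    rw [← intervalIntegral.integral_Iic_sub_Iic gauss_integrable.integrableOn
      gauss_integrable.integrableOn]
    unfold Phi; ring
  rw [hfun]
  apply HasDerivAt.const_add
  exact intervalIntegral.integral_hasDerivAt_right
    (gauss_integrable.intervalIntegrable)
    (gauss_cont.stronglyMeasurable.stronglyMeasurableAtFilter)
    (gauss_cont.continuousAt)

theorem stmt11 (Δt γ : ℝ) (hΔt : 0 < Δt) (hγ : 0 < γ)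
    (G : ℝ → ℝ)
    (hG : ∀ σ : ℝ, G σ = (2+γ) * (1 - Real.exp (-σ^2*Δt/8))
        - γ * (2 * Phi (σ * Real.sqrt Δt / 2) - 1)) :
    ∃ σs : ℝ, 0 < σs ∧ G σs = 0 ∧
      (γ/(2+γ)) * Real.sqrt (8/(π*Δt)) < σs ∧
      (∀ σ : ℝ, 0 < σ → σ < σs → G σ < 0) ∧
      (∀ σ : ℝ, σs < σ → 0 < G σ) ∧
      (∀ σ : ℝ, 0 < σ → G σ = 0 → σ = σs) := by
  have hπ := Real.pi_pos
  set k := Real.sqrt Δt with hk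
  have hkpos : 0 < k := Real.sqrt_pos.mpr hΔt
  have hk2 : k^2 = Δt := Real.sq_sqrt hΔt.le
  have h2γ : (0:ℝ) < 2 + γ := by linarith
  set σb := (γ/(2+γ)) * Real.sqrt (8/(π*Δt)) with hσb
  have hσbpos : 0 < σb := by
    apply mul_pos (div_pos hγ h2γ)
    apply Real.sqrt_pos.mpr; positivity
  have hkey : γ * k / Real.sqrt (2*π) = (2+γ) * σb * Δt / 4 := by
    have h1 : Real.sqrt (8/(π*Δt)) * (Δt/4) = Real.sqrt (Δt/(2*π)) := by
      rw [show Δt/4 = Real.sqrt ((Δt/4)^2) from (Real.sqrt_sq (by positivity)).symm,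
        ← Real.sqrt_mul (by positivity)]
      congr 1
      field_simp
      ring
    have h2 : Real.sqrt (Δt/(2*π)) = k / Real.sqrt (2*π) := Real.sqrt_div hΔt.le _
    rw [hσb, mul_div_assoc, ← h2, ← h1]
    field_simp
  set E : ℝ → ℝ := fun σ => Real.exp (-σ^2*Δt/8) with hE
  have hEpos : ∀ σ, 0 < E σ := fun σ => Real.exp_pos _
  set L : ℝ → ℝ := fun σ => (2+γ)*Δt/4 * (σ - σb) with hL
  have h2π : Real.sqrt (2*π) ≠ 0 := by positivity
  have hDG : ∀ σ, HasDerivAt G (E σ * L σ) σ := by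
    intro σ
    have hGf : G = fun σ => (2+γ) * (1 - Real.exp (-σ^2*Δt/8))
        - γ * (2 * Phi (σ * k / 2) - 1) := funext hG
    have h1 : HasDerivAt (fun y : ℝ => -y^2*Δt/8) (-2*σ*Δt/8) σ := by
      have h : HasDerivAt (fun y : ℝ => -y^2*Δt/8) _ σ :=
        ((hasDerivAt_pow 2 σ).neg.mul_const Δt).div_const 8
      convert h using 1
      norm_num
    have hE' : HasDerivAt (fun y : ℝ => Real.exp (-y^2*Δt/8)) (E σ * (-2*σ*Δt/8)) σ := h1.exp
    have hg : HasDerivAt (fun y : ℝ => y * k / 2) (k/2) σ := by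
      have := ((hasDerivAt_id σ).mul_const k).div_const 2
      simpa using this
    have hP : HasDerivAt (fun y : ℝ => Phi (y * k / 2))
        (Real.exp (-(σ*k/2)^2/2)/Real.sqrt (2*π) * (k/2)) σ :=
      by have := (hasDerivAt_Phi (σ*k/2)).comp σ hg; exact this
    have hGd : HasDerivAt G ((2+γ)*(0 - E σ * (-2*σ*Δt/8))
        - γ*(2*(Real.exp (-(σ*k/2)^2/2)/Real.sqrt (2*π) * (k/2)))) σ := by
      rw [hGf]
      exact (((hasDerivAt_const σ 1).sub hE').const_mul _).sub
        (((hP.const_mul 2).sub_const 1).const_mul γ)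
    convert hGd using 1
    have hsq : (σ*k/2)^2 = σ^2*Δt/4 := by rw [div_pow, mul_pow, hk2]; ring
    have hexp : Real.exp (-(σ*k/2)^2/2) = E σ := by
      rw [hE]; congr 1; rw [hsq]; ring
    rw [hexp, hL, hE]
    simp only []
    linear_combination (Real.exp (-σ^2*Δt/8)) * hkey
  have hdiff : Differentiable ℝ G := fun σ => (hDG σ).differentiableAt
  have hcont : Continuous G := hdiff.continuous
  have hderiv : ∀ σ, deriv G σ = E σ * L σ := fun σ => (hDG σ).deriv
  have hanti : StrictAntiOn G (Icc 0 σb) := by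
    apply strictAntiOn_of_deriv_neg (convex_Icc _ _) hcont.continuousOn
    intro x hx
    rw [interior_Icc] at hx
    rw [hderiv]
    apply mul_neg_of_pos_of_neg (hEpos x)
    rw [hL]
    exact mul_neg_of_pos_of_neg (by positivity) (by simp; linarith [hx.2])
  have hmono : StrictMonoOn G (Ici σb) := by
    apply strictMonoOn_of_deriv_pos (convex_Ici _) hcont.continuousOn
    intro x hx
    rw [interior_Ici] at hx
    rw [hderiv]
    apply mul_pos (hEpos x)
    rw [hL]
    exact mul_pos (by positivity) (by simp; linarith [hx.out])
  have hG0 : G 0 = 0 := by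
    rw [hG 0]
    norm_num [Phi_zero]
  have hGσb : G σb < 0 := by
    have := hanti (show (0:ℝ) ∈ Icc 0 σb from ⟨le_refl 0, hσbpos.le⟩)
      ⟨hσbpos.le, le_refl σb⟩ hσbpos
    linarith [hG0]
  -- a point where G is positive
  set Lg := Real.log ((2+γ)/2) with hLg
  have hLgnn : 0 ≤ Lg := Real.log_nonneg (by linarith)
  set B := max (σb+1) (Real.sqrt (8*(Lg+1)/Δt)) with hB
  have hBgt : σb < B := lt_of_lt_of_le (by linarith) (le_max_left _ _)
  have hBsq : 8*(Lg+1)/Δt ≤ B^2 := by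
    have h1 : Real.sqrt (8*(Lg+1)/Δt) ≤ B := le_max_right _ _
    have h2 : (0:ℝ) ≤ 8*(Lg+1)/Δt := by positivity
    calc 8*(Lg+1)/Δt = (Real.sqrt (8*(Lg+1)/Δt))^2 := (Real.sq_sqrt h2).symm
      _ ≤ B^2 := by nlinarith [Real.sqrt_nonneg (8*(Lg+1)/Δt)]
  have hEB : Real.exp (-B^2*Δt/8) < 2/(2+γ) := by
    have h1 : Lg < B^2*Δt/8 := by
      have := (div_le_iff₀ hΔt).mp hBsq
      linarith
    have h2 : Real.exp (-B^2*Δt/8) < Real.exp (-Lg) :=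
      Real.exp_lt_exp.mpr (by linarith)
    have h3 : Real.exp (-Lg) = 2/(2+γ) := by
      rw [hLg, Real.exp_neg, Real.exp_log (by positivity), inv_div]
    linarith
  have hGB : 0 < G B := by
    rw [hG B]
    have hΦ := Phi_le_one (B * k / 2)
    have he : (2+γ) * (2/(2+γ)) = 2 := by field_simp
    nlinarith [mul_lt_mul_of_pos_left hEB h2γ, Real.exp_pos (-B^2*Δt/8)]
  obtain ⟨σs, hmem, hσs⟩ := intermediate_value_Ioo hBgt.le hcont.continuousOn ⟨hGσb, hGB⟩
  have hσbσs : σb < σs := hmem.1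
  have hσspos : 0 < σs := hσbpos.trans hσbσs
  have hneg : ∀ σ : ℝ, 0 < σ → σ < σs → G σ < 0 := by
    intro σ hσpos hσlt
    rcases le_or_gt σ σb with h | h
    · have := hanti (show (0:ℝ) ∈ Icc 0 σb from ⟨le_refl 0, hσbpos.le⟩)
        ⟨hσpos.le, h⟩ hσpos
      linarith [hG0]
    · have := hmono h.le hσbσs.le hσlt
      rw [hσs] at this
      exact this
  have hpos : ∀ σ : ℝ, σs < σ → 0 < G σ := by
    intro σ hσgt
    have := hmono hσbσs.le (hσbσs.trans hσgt).le hσgt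
    rw [hσs] at this
    exact this
  refine ⟨σs, hσspos, hσs, hσbσs, hneg, hpos, ?_⟩
  intro σ hσpos hσ0
  rcases lt_trichotomy σ σs with h|h|h
  · exact absurd hσ0 (hneg σ hσpos h).ne
  · exact h
  · exact absurd hσ0.symm (hpos σ h).ne
end
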